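/- Let n, k, p be natural numbers with n > p and k > p. Let the law of the random variable U on (0,∞) be the Gamma mixture (Gamma((n−p)/2, rate 1/2)).bind (fun v => Gamma((k−p)/2, rate 1/(2v))), i.e. V ~ χ²_{n−p} and conditionally on V = v, U ~ Gamma(shape (k−p)/2, scale 2v). Then U has Lebesgue density h(u) = ( 2^{−(n+k−2p)/2} / ( Γ((k−p)/2) Γ((n−p)/2) ) ) · u^{(k−p)/2−1} · ∫_0^∞ v^{(n−k)/2−1} e^{−(u/v + v)/2} dv for u > 0. (This is the paper's unconditional distribution of the sketched residual sum of squares SSR_s/σ², equation (9), with the modified Bessel function K_{(k−n)/2}(√u) written via its integral representation.) -/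

import Mathlib

open MeasureTheory ProbabilityTheory Real Set
open scoped ENNReal

lemma aux_measurable_gammaPDF_pair (b : ℝ) :
    Measurable fun q : ℝ × ℝ => gammaPDF b (1 / (2 * q.1)) q.2 := by
  unfold gammaPDF gammaPDFReal
  apply Measurable.ennreal_ofReal
  apply Measurable.ite (measurableSet_le measurable_const measurable_snd)
  · apply Measurable.mul
    · apply Measurable.mul
      · exact ((measurable_const.div (measurable_const.mul measurable_fst)).pow_const _).div_const _
      · exact measurable_snd.pow_const _
    · exact (((measurable_const.div (measurable_const.mul measurable_fst)).mul
        measurable_snd).neg).exp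
  · exact measurable_const

lemma aux_measurable_gammaKernel (b : ℝ) :
    Measurable fun v : ℝ => gammaMeasure b (1 / (2 * v)) := by
  refine Measure.measurable_of_measurable_coe _ fun s hs => ?_
  have : (fun v : ℝ => gammaMeasure b (1 / (2 * v)) s)
      = fun v : ℝ => ∫⁻ u in s, gammaPDF b (1 / (2 * v)) u := by
    funext v; exact withDensity_apply _ hs
  rw [this]
  exact (aux_measurable_gammaPDF_pair b).lintegral_prod_right'

/-- If `V ~ χ²_{n−p}` and `U | V = v ~ Gamma(shape (k−p)/2, scale 2v)`, then `U`
(the unconditional law of `SSR_s/σ²`) has Lebesgue density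
`u ↦ 2^(−(n+k−2p)/2)/(Γ((k−p)/2)Γ((n−p)/2)) · u^((k−p)/2−1) · ∫_0^∞ v^((n−k)/2−1) e^(−(u/v+v)/2) dv`
on `(0,∞)`. -/
theorem sketched_residuals_unconditional_density
    (n k p : ℕ) (hnp : p < n) (hkp : p < k) :
    (gammaMeasure (((n : ℝ) - p) / 2) (1 / 2)).bind
        (fun v => gammaMeasure (((k : ℝ) - p) / 2) (1 / (2 * v))) =
      volume.withDensity (fun u =>
        ENNReal.ofReal (if 0 < u then
          (2 : ℝ) ^ (-(((n : ℝ) + k - 2 * p) / 2)) /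
              (Real.Gamma (((k : ℝ) - p) / 2) * Real.Gamma (((n : ℝ) - p) / 2)) *
            u ^ (((k : ℝ) - p) / 2 - 1) *
            ∫ v in Set.Ioi (0 : ℝ),
              v ^ (((n : ℝ) - k) / 2 - 1) * Real.exp (-(u / v + v) / 2)
        else 0)) := by
  have hpn : (p : ℝ) < n := by exact_mod_cast hnp
  have hpk : (p : ℝ) < k := by exact_mod_cast hkp
  set a : ℝ := ((n : ℝ) - p) / 2 with ha_def
  set b : ℝ := ((k : ℝ) - p) / 2 with hb_def
  have ha : 0 < a := by rw [ha_def]; linarith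
  have hb : 0 < b := by rw [hb_def]; linarith
  set L : ℝ → ℝ≥0∞ :=
    fun u => ∫⁻ v, gammaPDF a (1 / 2) v * gammaPDF b (1 / (2 * v)) u with hL_def
  have hker : Measurable fun v : ℝ => gammaMeasure b (1 / (2 * v)) :=
    aux_measurable_gammaKernel b
  have hF : Measurable fun q : ℝ × ℝ => gammaPDF a (1 / 2) q.2 * gammaPDF b (1 / (2 * q.2)) q.1 :=
    (((measurable_gammaPDFReal a (1 / 2)).ennreal_ofReal).comp measurable_snd).mul
      ((aux_measurable_gammaPDF_pair b).comp measurable_swap)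
  have hL : Measurable L := Measurable.lintegral_prod_right' hF
  have key : (gammaMeasure a (1 / 2)).bind (fun v => gammaMeasure b (1 / (2 * v)))
      = volume.withDensity L := by
    ext s hs
    rw [Measure.bind_apply hs hker.aemeasurable, withDensity_apply _ hs]
    calc ∫⁻ v, gammaMeasure b (1 / (2 * v)) s ∂gammaMeasure a (1 / 2)
        = ∫⁻ v, gammaPDF a (1 / 2) v * gammaMeasure b (1 / (2 * v)) s := by
          have hpdf : Measurable (gammaPDF a (1 / 2)) :=
            (measurable_gammaPDFReal a (1 / 2)).ennreal_ofReal
          have hg : Measurable fun v : ℝ => gammaMeasure b (1 / (2 * v)) s :=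
            (Measure.measurable_coe hs).comp hker
          rw [show gammaMeasure a (1 / 2) = volume.withDensity (gammaPDF a (1 / 2)) from rfl,
            lintegral_withDensity_eq_lintegral_mul volume hpdf hg]
          rfl
      _ = ∫⁻ v, ∫⁻ u in s, gammaPDF a (1 / 2) v * gammaPDF b (1 / (2 * v)) u := by
          refine lintegral_congr fun v => ?_
          rw [show (gammaMeasure b (1 / (2 * v))) s = ∫⁻ u in s, gammaPDF b (1 / (2 * v)) u from
              withDensity_apply _ hs]
          refine (lintegral_const_mul' _ _ ?_).symm
          simp [gammaPDF_eq]
      _ = ∫⁻ u in s, L u := lintegral_lintegral_swap ((hF.comp measurable_swap).aemeasurable)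
  rw [key]
  refine withDensity_congr_ae ?_
  have hne : ∀ᵐ u : ℝ, u ≠ 0 := by
    refine ae_iff.mpr ?_
    simpa using measure_singleton (0 : ℝ)
  have hmu_pos : ∀ᵐ v ∂gammaMeasure a (1 / 2), 0 < v := by
    rw [ae_iff]
    have hset : {v : ℝ | ¬ 0 < v} = Iic 0 := by ext v; simp
    rw [hset, show gammaMeasure a (1 / 2) = volume.withDensity (gammaPDF a (1 / 2)) from rfl,
      withDensity_apply _ measurableSet_Iic]
    have h0 : ∫⁻ v in Iic (0 : ℝ), gammaPDF a (1 / 2) v = ∫⁻ _ in Iic (0 : ℝ), 0 := by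
      refine setLIntegral_congr_fun_ae measurableSet_Iic ?_
      filter_upwards [hne] with v hv0 hvle
      exact gammaPDF_of_neg (lt_of_le_of_ne hvle hv0)
    rw [h0, lintegral_zero]
  have htot : ∫⁻ u, L u = 1 := by
    have h1 : (volume.withDensity L) univ = ∫⁻ u, L u := by
      rw [withDensity_apply _ MeasurableSet.univ, Measure.restrict_univ]
    have hprob : IsProbabilityMeasure (gammaMeasure a (1 / 2)) :=
      isProbabilityMeasure_gammaMeasure ha one_half_pos
    rw [← h1, ← key, Measure.bind_apply MeasurableSet.univ hker.aemeasurable]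
    rw [lintegral_congr_ae (g := fun _ => 1) ?_]
    · rw [lintegral_one]; exact measure_univ
    · filter_upwards [hmu_pos] with v hv
      have : IsProbabilityMeasure (gammaMeasure b (1 / (2 * v))) :=
        isProbabilityMeasure_gammaMeasure hb (by positivity)
      exact measure_univ
  have hfin : ∀ᵐ u : ℝ, L u < ⊤ := ae_lt_top hL (by rw [htot]; exact ENNReal.one_ne_top)
  filter_upwards [hfin, hne] with u hu hu0
  rcases lt_or_gt_of_ne hu0 with hneg | hpos
  · -- u < 0
    rw [if_neg (not_lt.mpr hneg.le), ENNReal.ofReal_zero, hL_def]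
    have : ∀ v : ℝ, gammaPDF a (1 / 2) v * gammaPDF b (1 / (2 * v)) u = 0 := fun v => by
      rw [gammaPDF_of_neg hneg, mul_zero]
    simp only [this, lintegral_zero]
  · -- 0 < u
    rw [if_pos hpos]
    set C : ℝ := (2 : ℝ) ^ (-(((n : ℝ) + k - 2 * p) / 2)) / (Real.Gamma b * Real.Gamma a)
      with hC_def
    have hCpos : 0 < C := div_pos (Real.rpow_pos_of_pos two_pos _)
      (mul_pos (Real.Gamma_pos_of_pos hb) (Real.Gamma_pos_of_pos ha))
    have hDpos : 0 < C * u ^ (b - 1) := mul_pos hCpos (Real.rpow_pos_of_pos hpos _)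
    have hsplit : L u = ∫⁻ v in Ioi (0 : ℝ),
        gammaPDF a (1 / 2) v * gammaPDF b (1 / (2 * v)) u := by
      have h0 : ∫⁻ v in Iic (0 : ℝ), gammaPDF a (1 / 2) v * gammaPDF b (1 / (2 * v)) u
          = ∫⁻ _ in Iic (0 : ℝ), 0 := by
        refine setLIntegral_congr_fun_ae measurableSet_Iic ?_
        filter_upwards [hne] with v hv0 hvle
        rw [gammaPDF_of_neg (lt_of_le_of_ne hvle hv0), zero_mul]
      have htt := lintegral_add_compl (μ := volume)
        (fun v => gammaPDF a (1 / 2) v * gammaPDF b (1 / (2 * v)) u)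
        (measurableSet_Ioi (a := (0 : ℝ)))
      rw [compl_Ioi, h0, lintegral_zero, add_zero] at htt
      rw [hL_def]
      exact htt.symm
    have hpoint : ∀ᵐ v : ℝ, v ∈ Ioi (0 : ℝ) →
        gammaPDF a (1 / 2) v * gammaPDF b (1 / (2 * v)) u
          = ENNReal.ofReal (C * u ^ (b - 1)) *
            ENNReal.ofReal (v ^ (((n : ℝ) - k) / 2 - 1) * Real.exp (-(u / v + v) / 2)) := by
      refine ae_of_all _ fun v hv => ?_
      have hv : (0 : ℝ) < v := hv
      rw [gammaPDF_of_nonneg hv.le, gammaPDF_of_nonneg hpos.le, ← ENNReal.ofReal_mul (by positivity),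
        ← ENNReal.ofReal_mul hDpos.le]
      congr 1
      have e1 : ((1 : ℝ) / (2 * v)) ^ b = 2 ^ (-b) * v ^ (-b) := by
        rw [one_div, Real.inv_rpow (by positivity), Real.mul_rpow (by norm_num) hv.le, mul_inv,
          ← Real.rpow_neg (by norm_num), ← Real.rpow_neg hv.le]
      have e2 : ((1 : ℝ) / 2) ^ a = 2 ^ (-a) := by
        rw [one_div, Real.inv_rpow (by norm_num), ← Real.rpow_neg (by norm_num)]
      have e3 : Real.exp (-((1 / 2) * v)) * Real.exp (-((1 / (2 * v)) * u))
          = Real.exp (-(u / v + v) / 2) := by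
        rw [← Real.exp_add]
        congr 1
        field_simp
        ring
      have e4 : v ^ (a - 1) * v ^ (-b) = v ^ (((n : ℝ) - k) / 2 - 1) := by
        rw [← Real.rpow_add hv]
        congr 1
        rw [ha_def, hb_def]; ring
      have e5 : (2 : ℝ) ^ (-a) * 2 ^ (-b) = 2 ^ (-(((n : ℝ) + k - 2 * p) / 2)) := by
        rw [← Real.rpow_add two_pos]
        congr 1
        rw [ha_def, hb_def]; ring
      calc (1 / 2) ^ a / Real.Gamma a * v ^ (a - 1) * Real.exp (-((1 / 2) * v)) *
            ((1 / (2 * v)) ^ b / Real.Gamma b * u ^ (b - 1) * Real.exp (-((1 / (2 * v)) * u)))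
          = ((1 / 2 : ℝ) ^ a * (1 / (2 * v)) ^ b) / (Real.Gamma b * Real.Gamma a) * u ^ (b - 1) *
            ((v ^ (a - 1) * Real.exp (-((1 / 2) * v))) * Real.exp (-((1 / (2 * v)) * u))) := by
            ring
        _ = C * u ^ (b - 1) * (v ^ (((n : ℝ) - k) / 2 - 1) * Real.exp (-(u / v + v) / 2)) := by
            rw [e1, e2, hC_def]
            rw [show (2:ℝ) ^ (-a) * (2 ^ (-b) * v ^ (-b)) = (2:ℝ)^(-a) * 2^(-b) * v^(-b) by ring,
              e5]
            rw [show v ^ (a - 1) * Real.exp (-((1 / 2) * v)) * Real.exp (-((1 / (2 * v)) * u))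
              = v ^ (a - 1) * (Real.exp (-((1 / 2) * v)) * Real.exp (-((1 / (2 * v)) * u))) by ring,
              e3]
            rw [show (2:ℝ) ^ (-(((n : ℝ) + k - 2 * p) / 2)) * v ^ (-b) /
              (Real.Gamma b * Real.Gamma a) * u ^ (b - 1) *
              (v ^ (a - 1) * Real.exp (-(u / v + v) / 2))
              = (2:ℝ) ^ (-(((n : ℝ) + k - 2 * p) / 2)) / (Real.Gamma b * Real.Gamma a) *
                u ^ (b - 1) * ((v ^ (a-1) * v ^ (-b)) * Real.exp (-(u / v + v) / 2)) by ring, e4]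
    have hLrw : L u = ENNReal.ofReal (C * u ^ (b - 1)) *
        ∫⁻ v in Ioi (0 : ℝ),
          ENNReal.ofReal (v ^ (((n : ℝ) - k) / 2 - 1) * Real.exp (-(u / v + v) / 2)) := by
      rw [hsplit, setLIntegral_congr_fun_ae measurableSet_Ioi hpoint,
        lintegral_const_mul' _ _ ENNReal.ofReal_ne_top]
    set I : ℝ≥0∞ := ∫⁻ v in Ioi (0 : ℝ),
      ENNReal.ofReal (v ^ (((n : ℝ) - k) / 2 - 1) * Real.exp (-(u / v + v) / 2)) with hI_def
    have hIfin : I ≠ ⊤ := by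
      intro hItop
      rw [hLrw, hItop, ENNReal.mul_top (by simpa using hDpos)] at hu
      exact (lt_irrefl _ hu).elim
    have hg_int : ∫ v in Ioi (0 : ℝ),
        v ^ (((n : ℝ) - k) / 2 - 1) * Real.exp (-(u / v + v) / 2) = I.toReal := by
      rw [hI_def]
      refine integral_eq_lintegral_of_nonneg_ae ?_ ?_
      · refine (ae_restrict_iff' measurableSet_Ioi).mpr (ae_of_all _ fun v hv => ?_)
        have hv : (0 : ℝ) < v := hv
        positivity
      · refine Measurable.aestronglyMeasurable ?_
        exact (measurable_id.pow_const _).mul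
          ((((measurable_const.div measurable_id).add measurable_id).neg.div_const 2).exp)
    calc L u = ENNReal.ofReal (C * u ^ (b - 1)) * I := hLrw
      _ = ENNReal.ofReal (C * u ^ (b - 1)) * ENNReal.ofReal I.toReal := by
          rw [ENNReal.ofReal_toReal hIfin]
      _ = ENNReal.ofReal (C * u ^ (b - 1) * I.toReal) := (ENNReal.ofReal_mul hDpos.le).symm
      _ = ENNReal.ofReal (C * u ^ (b - 1) *
          ∫ v in Ioi (0 : ℝ), v ^ (((n : ℝ) - k) / 2 - 1) * Real.exp (-(u / v + v) / 2)) := by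
          rw [hg_int]
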